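/- Let h : ℝ → ℝ be a twice continuously differentiable 2π-periodic function with h'' + h ≥ 0 everywhere, and let K = {x ∈ ℝ² : ⟨x, (cos θ, sin θ)⟩ ≤ h(θ) for all θ} be the convex body with support function h. Then the area of K is given by vol(K) = (1/2) ∫₀^{2π} h(θ)·(h''(θ) + h(θ)) dθ. -/

import Mathlib

open MeasureTheory Real

section CauchyAux
open Set

namespace CauchyArea

/-- second derivative plus function: radius of curvature -/
noncomputable def Rf (g : ℝ → ℝ) (θ : ℝ) : ℝ := deriv (deriv g) θ + g θ

/-- the convex body determined by support data `g` -/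
def Kset (g : ℝ → ℝ) : Set (ℝ × ℝ) :=
  {p | ∀ θ : ℝ, p.1 * Real.cos θ + p.2 * Real.sin θ ≤ g θ}

/-- boundary curve -/
noncomputable def gam (g : ℝ → ℝ) (θ : ℝ) : ℝ × ℝ :=
  (g θ * Real.cos θ - deriv g θ * Real.sin θ, g θ * Real.sin θ + deriv g θ * Real.cos θ)

/-- support evaluation of the curve point `gam g θ` in direction `φ` -/
noncomputable def supF (g : ℝ → ℝ) (φ θ : ℝ) : ℝ :=
  g θ * Real.cos (θ - φ) - deriv g θ * Real.sin (θ - φ)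

variable {g : ℝ → ℝ}

lemma diff0 (hg : ContDiff ℝ 2 g) : Differentiable ℝ g := hg.differentiable (by norm_num)

lemma cd1 (hg : ContDiff ℝ 2 g) : ContDiff ℝ 1 (deriv g) := by
  have hg' : ContDiff ℝ ((1 : WithTop ℕ∞) + 1) g := by norm_num; exact hg
  exact (contDiff_succ_iff_deriv.mp hg').2.2

lemma diff1 (hg : ContDiff ℝ 2 g) : Differentiable ℝ (deriv g) :=
  (cd1 hg).differentiable one_ne_zero

lemma cont2 (hg : ContDiff ℝ 2 g) : Continuous (deriv (deriv g)) := by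
  have hg' : ContDiff ℝ ((0 : WithTop ℕ∞) + 1) (deriv g) := by norm_num; exact cd1 hg
  exact (contDiff_succ_iff_deriv.mp hg').2.2.continuous

lemma contRf (hg : ContDiff ℝ 2 g) : Continuous (Rf g) :=
  (cont2 hg).add hg.continuous

lemma periodic_deriv (g : ℝ → ℝ) (hper : Function.Periodic g (2 * π)) :
    Function.Periodic (deriv g) (2 * π) := by
  intro x
  have : (fun y => g (y + 2 * π)) = g := funext fun y => hper y
  rw [← deriv_comp_add_const, this]

lemma supF_self (φ : ℝ) : supF g φ φ = g φ := by simp [supF]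

lemma gam_fst (θ : ℝ) : (gam g θ).1 = supF g 0 θ := by simp [gam, supF]

lemma gam_snd (θ : ℝ) : (gam g θ).2 = supF g (π/2) θ := by
  simp [gam, supF, Real.cos_sub, Real.sin_sub] <;> ring

lemma dot_gam (ψ θ : ℝ) :
    (gam g θ).1 * Real.cos ψ + (gam g θ).2 * Real.sin ψ = supF g ψ θ := by
  simp [gam, supF, Real.cos_sub, Real.sin_sub]
  ring

lemma hasDerivAt_supF (hg : ContDiff ℝ 2 g) (φ θ : ℝ) :
    HasDerivAt (supF g φ) (-(Rf g θ) * Real.sin (θ - φ)) θ := by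
  have hdg : HasDerivAt g (deriv g θ) θ := (diff0 hg θ).hasDerivAt
  have hdg' : HasDerivAt (deriv g) (deriv (deriv g) θ) θ := (diff1 hg θ).hasDerivAt
  have hcos : HasDerivAt (fun t => Real.cos (t - φ)) (-Real.sin (θ - φ)) θ := by
    simpa using ((hasDerivAt_id' θ).sub_const φ).cos
  have hsin : HasDerivAt (fun t => Real.sin (t - φ)) (Real.cos (θ - φ)) θ := by
    simpa using ((hasDerivAt_id' θ).sub_const φ).sin
  have := (hdg.mul hcos).sub (hdg'.mul hsin)
  refine this.congr_deriv ?_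
  simp [Rf]
  ring

lemma supF_periodic (hper : Function.Periodic g (2 * π)) (φ : ℝ) :
    Function.Periodic (supF g φ) (2 * π) := by
  intro θ
  unfold supF
  rw [show θ + 2*π - φ = (θ - φ) + 2*π by ring, Real.cos_add_two_pi, Real.sin_add_two_pi,
    hper θ, periodic_deriv g hper θ]

lemma diff_supF (hg : ContDiff ℝ 2 g) (φ : ℝ) : Differentiable ℝ (supF g φ) :=
  fun θ => (hasDerivAt_supF hg φ θ).differentiableAt

lemma deriv_supF (hg : ContDiff ℝ 2 g) (φ θ : ℝ) :
    deriv (supF g φ) θ = -(Rf g θ) * Real.sin (θ - φ) :=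
  (hasDerivAt_supF hg φ θ).deriv

lemma supF_mono (hg : ContDiff ℝ 2 g) (hR : ∀ θ, 0 ≤ Rf g θ) (φ : ℝ) :
    MonotoneOn (supF g φ) (Icc (φ - π) φ) := by
  apply monotoneOn_of_deriv_nonneg (convex_Icc _ _)
    (diff_supF hg φ).continuous.continuousOn
    ((diff_supF hg φ).differentiableOn)
  intro x hx
  rw [interior_Icc] at hx
  rw [deriv_supF hg]
  have hs : Real.sin (x - φ) < 0 :=
    Real.sin_neg_of_neg_of_neg_pi_lt (by linarith [hx.2]) (by linarith [hx.1])
  nlinarith [hR x]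

lemma supF_anti (hg : ContDiff ℝ 2 g) (hR : ∀ θ, 0 ≤ Rf g θ) (φ : ℝ) :
    AntitoneOn (supF g φ) (Icc φ (φ + π)) := by
  apply antitoneOn_of_deriv_nonpos (convex_Icc _ _)
    (diff_supF hg φ).continuous.continuousOn
    ((diff_supF hg φ).differentiableOn)
  intro x hx
  rw [interior_Icc] at hx
  rw [deriv_supF hg]
  have hs : 0 < Real.sin (x - φ) :=
    Real.sin_pos_of_pos_of_lt_pi (by linarith [hx.1]) (by linarith [hx.2])
  nlinarith [hR x]

lemma supF_strictMono (hg : ContDiff ℝ 2 g) (hR : ∀ θ, 0 < Rf g θ) (φ : ℝ) :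
    StrictMonoOn (supF g φ) (Icc (φ - π) φ) := by
  apply strictMonoOn_of_deriv_pos (convex_Icc _ _)
    (diff_supF hg φ).continuous.continuousOn
  intro x hx
  rw [interior_Icc] at hx
  rw [deriv_supF hg]
  have hs : Real.sin (x - φ) < 0 :=
    Real.sin_neg_of_neg_of_neg_pi_lt (by linarith [hx.2]) (by linarith [hx.1])
  nlinarith [hR x]

lemma supF_strictAnti (hg : ContDiff ℝ 2 g) (hR : ∀ θ, 0 < Rf g θ) (φ : ℝ) :
    StrictAntiOn (supF g φ) (Icc φ (φ + π)) := by
  apply strictAntiOn_of_deriv_neg (convex_Icc _ _)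
    (diff_supF hg φ).continuous.continuousOn
  intro x hx
  rw [interior_Icc] at hx
  rw [deriv_supF hg]
  have hs : 0 < Real.sin (x - φ) :=
    Real.sin_pos_of_pos_of_lt_pi (by linarith [hx.1]) (by linarith [hx.2])
  nlinarith [hR x]

lemma supF_le (hg : ContDiff ℝ 2 g) (hper : Function.Periodic g (2 * π))
    (hR : ∀ θ, 0 ≤ Rf g θ) (φ θ : ℝ) : supF g φ θ ≤ g φ := by
  have h2π : (0:ℝ) < 2 * π := by positivity
  set θ' := toIocMod h2π (φ - π) θ with hθ'def
  have hmem : θ' ∈ Ioc (φ - π) ((φ - π) + 2*π) := toIocMod_mem_Ioc h2π (φ - π) θ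
  have heq : supF g φ θ' = supF g φ θ := by
    have h2 := self_sub_toIocMod h2π (φ - π) θ
    have h3 : θ' = θ - (toIocDiv h2π (φ - π) θ) • (2*π) := by
      rw [← h2]; ring
    rw [h3]
    exact (supF_periodic hper φ).sub_zsmul_eq _
  rw [← heq, ← supF_self (g := g) φ]
  rcases le_or_gt θ' φ with hle | hlt
  · exact supF_mono hg hR φ ⟨hmem.1.le, hle⟩ ⟨by linarith [Real.pi_pos], le_rfl⟩ hle
  · exact supF_anti hg hR φ ⟨le_rfl, by linarith [Real.pi_pos]⟩
      ⟨hlt.le, by linarith [hmem.2]⟩ hlt.le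

lemma supF_lt (hg : ContDiff ℝ 2 g) (hper : Function.Periodic g (2 * π))
    (hR : ∀ θ, 0 < Rf g θ) {φ θ : ℝ} (h1 : -(2*π) < θ - φ) (h1' : θ - φ < 2*π)
    (h2 : θ ≠ φ) : supF g φ θ < g φ := by
  have hπ := Real.pi_pos
  rcases lt_or_ge θ φ with hlt | hge
  · rcases le_or_gt (φ - π) θ with h3 | h3
    · have := supF_strictMono hg hR φ ⟨h3, hlt.le⟩ ⟨by linarith, le_rfl⟩ hlt
      rwa [supF_self] at this
    · have hper' : supF g φ (θ + 2*π) = supF g φ θ := supF_periodic hper φ θ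
      rw [← hper']
      have := supF_strictAnti hg hR φ (show φ ∈ Icc φ (φ + π) from ⟨le_rfl, by linarith⟩)
        (show θ + 2*π ∈ Icc φ (φ + π) from ⟨by linarith, by linarith⟩) (by linarith)
      rwa [supF_self] at this
  · have hgt : φ < θ := lt_of_le_of_ne hge (Ne.symm h2)
    rcases le_or_gt θ (φ + π) with h3 | h3
    · have := supF_strictAnti hg hR φ ⟨le_rfl, by linarith⟩ ⟨hge, h3⟩ hgt
      rwa [supF_self] at this
    · have hper' : supF g φ (θ - 2*π + 2*π) = supF g φ (θ - 2*π) := supF_periodic hper φ _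
      rw [show θ = θ - 2*π + 2*π by ring, hper']
      have := supF_strictMono hg hR φ (show θ - 2*π ∈ Icc (φ - π) φ from ⟨by linarith, by linarith⟩)
        (show φ ∈ Icc (φ - π) φ from ⟨by linarith, le_rfl⟩) (by linarith)
      rwa [supF_self] at this


lemma isClosed_Kset (g : ℝ → ℝ) : IsClosed (Kset g) := by
  have : Kset g = ⋂ θ : ℝ, {p : ℝ × ℝ | p.1 * Real.cos θ + p.2 * Real.sin θ ≤ g θ} := by
    ext p; simp [Kset]
  rw [this]
  exact isClosed_iInter fun θ => isClosed_le (by fun_prop) continuous_const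

lemma exists_bound (hc : Continuous g) (hper : Function.Periodic g (2 * π)) :
    ∃ M : ℝ, 0 ≤ M ∧ ∀ θ, g θ ≤ M := by
  have h2π : (2 * π) ≠ 0 := by positivity
  have hb := hper.isBounded_of_continuous h2π hc
  obtain ⟨C, hC⟩ := isBounded_iff_forall_norm_le.mp hb
  exact ⟨max C 0, le_max_right _ _, fun θ =>
    le_trans (le_trans (le_abs_self _) (hC _ ⟨θ, rfl⟩)) (le_max_left _ _)⟩

lemma Kset_subset_closedBall {M : ℝ} (hM0 : 0 ≤ M) (hM : ∀ θ, g θ ≤ M) :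
    Kset g ⊆ Metric.closedBall 0 M := by
  intro p hp
  rcases eq_or_ne p 0 with rfl | hp0
  · simpa using hM0
  have hne : p.1 ≠ 0 ∨ p.2 ≠ 0 := by
    by_contra hcon
    push_neg at hcon
    exact hp0 (Prod.ext_iff.mpr ⟨by simpa using hcon.1, by simpa using hcon.2⟩)
  have hpos : 0 < p.1^2 + p.2^2 := by
    rcases hne with h | h
    · nlinarith [pow_two_pos_of_ne_zero h, sq_nonneg p.2]
    · nlinarith [pow_two_pos_of_ne_zero h, sq_nonneg p.1]
  set r := Real.sqrt (p.1^2 + p.2^2) with hrdef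
  have hr : 0 < r := Real.sqrt_pos.mpr hpos
  have hr2 : r^2 = p.1^2 + p.2^2 := Real.sq_sqrt hpos.le
  set z : ℂ := ⟨p.1, p.2⟩ with hzdef
  have hz : z ≠ 0 := by
    intro hz0
    rcases hne with h | h
    · exact h (by simpa [hzdef, Complex.ext_iff] using congrArg Complex.re hz0)
    · exact h (by simpa [hzdef, Complex.ext_iff] using congrArg Complex.im hz0)
  have habs : ‖z‖ = r := by
    rw [Complex.norm_def, Complex.normSq_apply, hrdef]
    norm_num [hzdef]
    ring_nf
  have hcos : Real.cos (Complex.arg z) = p.1 / r := by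
    rw [Complex.cos_arg hz, habs]
  have hsin : Real.sin (Complex.arg z) = p.2 / r := by
    rw [Complex.sin_arg, habs]
  have hkey := hp (Complex.arg z)
  rw [hcos, hsin] at hkey
  have hrr : r ≤ g (Complex.arg z) := by
    have : p.1 * (p.1 / r) + p.2 * (p.2 / r) = r := by
      field_simp
      nlinarith [hr2]
    linarith [hkey, this.symm.le]
  have hrM : r ≤ M := le_trans hrr (hM _)
  have h1 : |p.1| ≤ r := by
    rw [← Real.sqrt_sq_eq_abs]
    exact Real.sqrt_le_sqrt (by nlinarith [sq_nonneg p.2])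
  have h2 : |p.2| ≤ r := by
    rw [← Real.sqrt_sq_eq_abs]
    exact Real.sqrt_le_sqrt (by nlinarith [sq_nonneg p.1])
  rw [Metric.mem_closedBall, dist_zero_right, Prod.norm_def]
  simp only [Real.norm_eq_abs]
  exact max_le (le_trans h1 hrM) (le_trans h2 hrM)

noncomputable def clm2 (a b c d : ℝ) : ℝ × ℝ →L[ℝ] ℝ × ℝ :=
  (Matrix.toLin (Module.Basis.finTwoProd ℝ) (Module.Basis.finTwoProd ℝ) !![a, b; c, d]).toContinuousLinearMap

lemma clm2_apply (a b c d : ℝ) (v : ℝ × ℝ) :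
    clm2 a b c d v = (a * v.1 + b * v.2, c * v.1 + d * v.2) := by
  simp [clm2, Matrix.toLin_finTwoProd_apply]

lemma clm2_det (a b c d : ℝ) : (clm2 a b c d).det = a * d - b * c := by
  rw [ContinuousLinearMap.det, clm2]
  rw [LinearMap.coe_toContinuousLinearMap, LinearMap.det_toLin, Matrix.det_fin_two_of]

lemma gam_periodic (hper : Function.Periodic g (2 * π)) :
    Function.Periodic (gam g) (2 * π) := by
  intro θ
  unfold gam
  rw [Real.cos_add_two_pi, Real.sin_add_two_pi, hper θ, periodic_deriv g hper θ]

set_option maxHeartbeats 2000000 in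
lemma area_pos (hg : ContDiff ℝ 2 g) (hper : Function.Periodic g (2 * π))
    {c : ℝ} (hc : 0 < c) (hgc : ∀ θ, c ≤ g θ) (hRc : ∀ θ, c ≤ Rf g θ) :
    volume (Kset g) = ENNReal.ofReal ((1/2) * ∫ θ in (0:ℝ)..(2*π), g θ * Rf g θ) := by
  have h2π : (0:ℝ) < 2*π := by positivity
  have hπ := Real.pi_pos
  have hR0 : ∀ θ, 0 ≤ Rf g θ := fun θ => le_trans hc.le (hRc θ)
  have hRpos : ∀ θ, 0 < Rf g θ := fun θ => lt_of_lt_of_le hc (hRc θ)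
  have hgpos : ∀ θ, 0 < g θ := fun θ => lt_of_lt_of_le hc (hgc θ)
  set f : ℝ × ℝ → ℝ × ℝ := fun p => (p.1 * (gam g p.2).1, p.1 * (gam g p.2).2) with hfdef
  set s : Set (ℝ × ℝ) := Ioc (0:ℝ) 1 ×ˢ Ioc (0:ℝ) (2*π) with hsdef
  have hs : MeasurableSet s := measurableSet_Ioc.prod measurableSet_Ioc
  have hγ1 : ∀ θ, HasDerivAt (fun t => (gam g t).1) (-(Rf g θ) * Real.sin θ) θ := by
    intro θ
    have hfun : (fun t => (gam g t).1) = supF g 0 := funext fun t => gam_fst t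
    rw [hfun]
    simpa using hasDerivAt_supF hg 0 θ
  have hγ2 : ∀ θ, HasDerivAt (fun t => (gam g t).2) (Rf g θ * Real.cos θ) θ := by
    intro θ
    have hfun : (fun t => (gam g t).2) = supF g (π/2) := funext fun t => gam_snd t
    rw [hfun]
    have := hasDerivAt_supF hg (π/2) θ
    convert this using 1
    rw [Real.sin_sub_pi_div_two]
    ring
  set f' : ℝ × ℝ → (ℝ × ℝ →L[ℝ] ℝ × ℝ) := fun p =>
    clm2 ((gam g p.2).1) (p.1 * (-(Rf g p.2) * Real.sin p.2))
         ((gam g p.2).2) (p.1 * (Rf g p.2 * Real.cos p.2)) with hf'def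
  have hf' : ∀ p : ℝ × ℝ, HasFDerivAt f (f' p) p := by
    intro p
    have H1 := (hasFDerivAt_fst (𝕜 := ℝ) (p := p)).mul
      ((hγ1 p.2).comp_hasFDerivAt p hasFDerivAt_snd)
    have H2 := (hasFDerivAt_fst (𝕜 := ℝ) (p := p)).mul
      ((hγ2 p.2).comp_hasFDerivAt p hasFDerivAt_snd)
    have Hp := HasFDerivAt.prodMk H1 H2
    refine Hp.congr_fderiv ?_
    apply ContinuousLinearMap.ext
    rintro ⟨u, v⟩
    simp only [hf'def, clm2_apply, ContinuousLinearMap.prod_apply, ContinuousLinearMap.add_apply,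
      ContinuousLinearMap.coe_smul', Pi.smul_apply, ContinuousLinearMap.coe_fst',
      ContinuousLinearMap.coe_snd', Function.comp_apply, smul_eq_mul, Prod.mk.injEq]
    constructor <;> ring
  have hdet : ∀ p : ℝ × ℝ, (f' p).det = p.1 * (Rf g p.2 * g p.2) := by
    intro p
    have hd := dot_gam (g := g) p.2 p.2
    rw [supF_self] at hd
    simp only [hf'def]
    rw [clm2_det]
    linear_combination (p.1 * Rf g p.2) * hd
  have hinj : Set.InjOn f s := by
    rintro ⟨t₁, θ₁⟩ h₁ ⟨t₂, θ₂⟩ h₂ heq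
    simp only [hsdef, mem_prod, mem_Ioc] at h₁ h₂
    simp only [hfdef, Prod.mk.injEq] at heq
    obtain ⟨E1, E2⟩ := heq
    have D : ∀ ψ, t₁ * supF g ψ θ₁ = t₂ * supF g ψ θ₂ := by
      intro ψ
      have d1 := dot_gam (g := g) ψ θ₁
      have d2 := dot_gam (g := g) ψ θ₂
      linear_combination (-t₁) * d1 + t₂ * d2 + Real.cos ψ * E1 + Real.sin ψ * E2
    have h12 : t₁ ≤ t₂ := by
      have hD := D θ₁
      rw [supF_self] at hD
      have hb := supF_le hg hper hR0 θ₁ θ₂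
      have hgp := hgpos θ₁
      nlinarith [h₂.1.1]
    have h21 : t₂ ≤ t₁ := by
      have hD := D θ₂
      rw [supF_self] at hD
      have hb := supF_le hg hper hR0 θ₂ θ₁
      have hgp := hgpos θ₂
      nlinarith [h₁.1.1]
    have ht : t₁ = t₂ := le_antisymm h12 h21
    have hθ : θ₁ = θ₂ := by
      by_contra hne
      have hD := D θ₁
      rw [supF_self] at hD
      have hlt := supF_lt hg hper hRpos (φ := θ₁) (θ := θ₂)
        (by linarith [h₁.2.2, h₂.2.1]) (by linarith [h₁.2.1, h₂.2.2]) (Ne.symm hne)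
      rw [ht] at hD
      nlinarith [h₂.1.1]
    simp [Prod.ext_iff, ht, hθ]
  have himg : f '' s ⊆ Kset g := by
    rintro x ⟨⟨t, θ⟩, hmem, rfl⟩ ψ
    simp only [hsdef, mem_prod, mem_Ioc] at hmem
    have hd := dot_gam (g := g) ψ θ
    have hb := supF_le hg hper hR0 ψ θ
    have h1 : (f (t, θ)).1 * Real.cos ψ + (f (t, θ)).2 * Real.sin ψ = t * supF g ψ θ := by
      simp only [hfdef]
      linear_combination t * hd
    rw [h1]
    rcases le_or_gt 0 (supF g ψ θ) with hs0 | hs0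
    · nlinarith [hmem.1.1, hmem.1.2]
    · nlinarith [hmem.1.1, hgpos ψ]
  have hcover : Kset g ⊆ f '' s ∪ {0} := by
    intro x hx
    rcases eq_or_ne x 0 with rfl | hx0
    · exact Or.inr rfl
    left
    set T : Set ℝ := {t : ℝ | 0 ≤ t ∧ ((t * x.1, t * x.2) : ℝ × ℝ) ∈ Kset g} with hTdef
    obtain ⟨M, hM0, hM⟩ := exists_bound hg.continuous hper
    have hxnorm : 0 < ‖x‖ := norm_pos_iff.mpr hx0
    have hTb : BddAbove T := by
      refine ⟨M / ‖x‖, ?_⟩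
      rintro t ⟨ht0, htK⟩
      have hball := Kset_subset_closedBall hM0 hM htK
      rw [Metric.mem_closedBall, dist_zero_right] at hball
      have hsm : ((t * x.1, t * x.2) : ℝ × ℝ) = t • x := by
        rw [Prod.ext_iff]
        constructor <;> simp
      rw [hsm, norm_smul, Real.norm_eq_abs, abs_of_nonneg ht0] at hball
      exact (le_div_iff₀ hxnorm).mpr hball
    have h1T : (1:ℝ) ∈ T := ⟨zero_le_one, by simpa using hx⟩
    have hTc : IsClosed T := by
      have hTeq : T = {t : ℝ | 0 ≤ t} ∩
          ((fun t : ℝ => ((t * x.1, t * x.2) : ℝ × ℝ)) ⁻¹' (Kset g)) := by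
        ext t; simp [hTdef, mem_preimage]
      rw [hTeq]
      exact (isClosed_le continuous_const continuous_id).inter
        ((isClosed_Kset g).preimage (by fun_prop))
    set τ := sSup T with hτdef
    have hτT : τ ∈ T := hTc.csSup_mem ⟨1, h1T⟩ hTb
    have hτ1 : 1 ≤ τ := le_csSup hTb h1T
    have hτ0 : 0 < τ := lt_of_lt_of_le one_pos hτ1
    set y1 := τ * x.1 with hy1def
    set y2 := τ * x.2 with hy2def
    have hyK : ∀ ψ, y1 * Real.cos ψ + y2 * Real.sin ψ ≤ g ψ := fun ψ => hτT.2 ψ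
    set Q : ℝ → ℝ := fun ψ => y1 * Real.cos ψ + y2 * Real.sin ψ - g ψ with hQdef
    have hQcont : Continuous Q := by
      apply Continuous.sub _ hg.continuous
      exact (continuous_const.mul Real.continuous_cos).add
        (continuous_const.mul Real.continuous_sin)
    have hQper : Function.Periodic Q (2*π) := by
      intro ψ
      simp only [hQdef]
      rw [Real.cos_add_two_pi, Real.sin_add_two_pi, hper ψ]
    obtain ⟨φ₀, hφ₀mem, hφ₀max⟩ := isCompact_Icc.exists_isMaxOn
      (⟨0, by constructor <;> [exact le_rfl; positivity]⟩ : (Icc (0:ℝ) (2*π)).Nonempty)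
      hQcont.continuousOn
    have hglobal : ∀ ψ, Q ψ ≤ Q φ₀ := by
      intro ψ
      set ψ' := toIcoMod h2π 0 ψ with hψ'
      have hmem : ψ' ∈ Ico (0:ℝ) (0 + 2*π) := toIcoMod_mem_Ico h2π 0 ψ
      have heq : Q ψ' = Q ψ := by
        have hself := self_sub_toIcoMod h2π 0 ψ
        have h3 : ψ' = ψ - (toIcoDiv h2π 0 ψ) • (2*π) := by linarith
        rw [h3]
        exact hQper.sub_zsmul_eq _
      rw [← heq]
      exact isMaxOn_iff.mp hφ₀max ψ' ⟨hmem.1, by linarith [hmem.2]⟩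
    have hQ_eval : ∀ ψ, Q ψ = y1 * Real.cos ψ + y2 * Real.sin ψ - g ψ := fun ψ => rfl
    have hQφ0 : Q φ₀ = 0 := by
      have hQle : Q φ₀ ≤ 0 := by
        rw [hQ_eval]
        linarith [hyK φ₀]
      rcases hQle.lt_or_eq with hltQ | heqQ
      · exfalso
        set ε := -Q φ₀ with hε
        have hεpos : 0 < ε := by simp only [hε]; linarith
        set A := |y1| + |y2| with hA
        have hA0 : 0 ≤ A := by positivity
        set δ := ε / (A + 1) with hδ
        have hδpos : 0 < δ := by positivity
        have hδb : δ * A < ε := by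
          have hd1 : δ * (A + 1) = ε := by
            rw [hδ]; field_simp
          nlinarith
        have hmemT : τ * (1 + δ) ∈ T := by
          constructor
          · positivity
          · intro ψ
            show (τ * (1 + δ)) * x.1 * Real.cos ψ + (τ * (1 + δ)) * x.2 * Real.sin ψ ≤ g ψ
            have hQψ : Q ψ ≤ -ε := by
              have := hglobal ψ
              simp only [hε] at *
              linarith
            have hQψ' : y1 * Real.cos ψ + y2 * Real.sin ψ ≤ g ψ - ε := by
              rw [hQ_eval] at hQψ
              linarith
            have hyb : y1 * Real.cos ψ + y2 * Real.sin ψ ≤ A := by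
              have c1 : y1 * Real.cos ψ ≤ |y1| := by
                calc y1 * Real.cos ψ ≤ |y1 * Real.cos ψ| := le_abs_self _
                  _ = |y1| * |Real.cos ψ| := abs_mul _ _
                  _ ≤ |y1| * 1 :=
                      mul_le_mul_of_nonneg_left (Real.abs_cos_le_one ψ) (abs_nonneg _)
                  _ = |y1| := mul_one _
              have c2 : y2 * Real.sin ψ ≤ |y2| := by
                calc y2 * Real.sin ψ ≤ |y2 * Real.sin ψ| := le_abs_self _
                  _ = |y2| * |Real.sin ψ| := abs_mul _ _
                  _ ≤ |y2| * 1 :=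
                      mul_le_mul_of_nonneg_left (Real.abs_sin_le_one ψ) (abs_nonneg _)
                  _ = |y2| := mul_one _
              rw [hA]; linarith
            calc (τ * (1 + δ)) * x.1 * Real.cos ψ + (τ * (1 + δ)) * x.2 * Real.sin ψ
                = (y1 * Real.cos ψ + y2 * Real.sin ψ)
                  + δ * (y1 * Real.cos ψ + y2 * Real.sin ψ) := by
                  rw [hy1def, hy2def]; ring
              _ ≤ (g ψ - ε) + δ * A := by
                  have h2 := mul_le_mul_of_nonneg_left hyb hδpos.le
                  linarith
              _ ≤ g ψ := by linarith
        have hcontra := le_csSup hTb hmemT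
        nlinarith
      · exact heqQ
    have hQderiv : HasDerivAt Q
        (y1 * (-Real.sin φ₀) + y2 * Real.cos φ₀ - deriv g φ₀) φ₀ := by
      have h1 : HasDerivAt (fun ψ => y1 * Real.cos ψ) (y1 * (-Real.sin φ₀)) φ₀ :=
        (Real.hasDerivAt_cos φ₀).const_mul y1
      have h2 : HasDerivAt (fun ψ => y2 * Real.sin ψ) (y2 * Real.cos φ₀) φ₀ :=
        (Real.hasDerivAt_sin φ₀).const_mul y2
      exact (h1.add h2).sub ((diff0 hg φ₀).hasDerivAt)
    have hloc : IsLocalMax Q φ₀ := Filter.Eventually.of_forall hglobal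
    have hd0 := hloc.hasDerivAt_eq_zero hQderiv
    have E1 : y1 * Real.cos φ₀ + y2 * Real.sin φ₀ = g φ₀ := by
      have := hQφ0
      rw [hQ_eval] at this
      linarith
    have E2 : -(y1 * Real.sin φ₀) + y2 * Real.cos φ₀ = deriv g φ₀ := by linarith [hd0]
    have hcs := Real.sin_sq_add_cos_sq φ₀
    have hy1 : y1 = (gam g φ₀).1 := by
      simp only [gam]
      linear_combination Real.cos φ₀ * E1 - Real.sin φ₀ * E2 - y1 * hcs
    have hy2 : y2 = (gam g φ₀).2 := by
      simp only [gam]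
      linear_combination Real.sin φ₀ * E1 + Real.cos φ₀ * E2 - y2 * hcs
    set θ₀ := toIocMod h2π 0 φ₀ with hθ₀
    have hθmem : θ₀ ∈ Ioc (0:ℝ) (0 + 2*π) := toIocMod_mem_Ioc h2π 0 φ₀
    have hgam_eq : gam g θ₀ = gam g φ₀ := by
      have hself := self_sub_toIocMod h2π 0 φ₀
      have h3 : θ₀ = φ₀ - (toIocDiv h2π 0 φ₀) • (2*π) := by linarith
      rw [h3]
      exact (gam_periodic hper).sub_zsmul_eq _
    refine ⟨(τ⁻¹, θ₀), ⟨?_, ?_⟩, ?_⟩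
    · constructor
      · exact inv_pos.mpr hτ0
      · rw [← one_div]
        exact (div_le_one hτ0).mpr hτ1
    · exact ⟨hθmem.1, by linarith [hθmem.2]⟩
    · show (τ⁻¹ * (gam g θ₀).1, τ⁻¹ * (gam g θ₀).2) = x
      rw [hgam_eq, ← hy1, ← hy2, hy1def, hy2def, Prod.ext_iff]
      constructor
      · show τ⁻¹ * (τ * x.1) = x.1
        field_simp
      · show τ⁻¹ * (τ * x.2) = x.2
        field_simp
  have hKvol : volume (Kset g) = volume (f '' s) := by
    apply le_antisymm
    · calc volume (Kset g) ≤ volume (f '' s ∪ {0}) := measure_mono hcover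
        _ ≤ volume (f '' s) + volume ({0} : Set (ℝ × ℝ)) := measure_union_le _ _
        _ = volume (f '' s) := by
            have h0 : ({0} : Set (ℝ × ℝ)) = ({0} : Set ℝ) ×ˢ ({0} : Set ℝ) := by
              ext p; simp [Prod.ext_iff]
            rw [h0, Measure.volume_eq_prod, Measure.prod_prod]
            simp
    · exact measure_mono himg
  have hCOV := lintegral_abs_det_fderiv_eq_addHaar_image volume hs
    (fun p _ => (hf' p).hasFDerivWithinAt) hinj
  have hcontd : Continuous fun p : ℝ × ℝ => |(f' p).det| := by
    have hfun : (fun p : ℝ × ℝ => |(f' p).det|) = fun p : ℝ × ℝ => |p.1 * (Rf g p.2 * g p.2)| := by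
      funext p; rw [hdet]
    rw [hfun]
    exact (continuous_fst.mul (((contRf hg).comp continuous_snd).mul
      (hg.continuous.comp continuous_snd))).abs
  have hIntOn : IntegrableOn (fun p : ℝ × ℝ => |(f' p).det|) s := by
    have hK : IsCompact (Icc (0:ℝ) 1 ×ˢ Icc (0:ℝ) (2*π)) := isCompact_Icc.prod isCompact_Icc
    exact (hcontd.continuousOn.integrableOn_compact hK).mono_set
      (Set.prod_mono Ioc_subset_Icc_self Ioc_subset_Icc_self)
  have hlhs : (∫⁻ p in s, ENNReal.ofReal |(f' p).det|) = ENNReal.ofReal (∫ p in s, |(f' p).det|) :=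
    (ofReal_integral_eq_lintegral_ofReal hIntOn
      (Filter.Eventually.of_forall fun p => abs_nonneg _)).symm
  have hIntegral : (∫ p in s, |(f' p).det|) = (1/2) * ∫ θ in (0:ℝ)..(2*π), g θ * Rf g θ := by
    have hcongr : (∫ p in s, |(f' p).det|) = ∫ p in s, p.1 * (Rf g p.2 * g p.2) := by
      apply setIntegral_congr_fun hs
      intro p hp
      simp only [hsdef, mem_prod, mem_Ioc] at hp
      show |(f' p).det| = p.1 * (Rf g p.2 * g p.2)
      rw [hdet]
      exact abs_of_nonneg (mul_nonneg hp.1.1.le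
        (mul_nonneg (hRpos p.2).le (hgpos p.2).le))
    rw [hcongr]
    have hprod : (∫ p in s, p.1 * (Rf g p.2 * g p.2))
        = (∫ t in Ioc (0:ℝ) 1, t) * ∫ θ in Ioc (0:ℝ) (2*π), Rf g θ * g θ := by
      rw [hsdef, Measure.volume_eq_prod, ← Measure.prod_restrict]
      exact integral_prod_mul (fun t => t) (fun θ => Rf g θ * g θ)
    rw [hprod]
    have ht : (∫ t in Ioc (0:ℝ) 1, t) = 1/2 := by
      rw [← intervalIntegral.integral_of_le zero_le_one]
      simp
    have hθeq : (∫ θ in Ioc (0:ℝ) (2*π), Rf g θ * g θ)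
        = ∫ θ in (0:ℝ)..(2*π), g θ * Rf g θ := by
      rw [intervalIntegral.integral_of_le h2π.le]
      exact setIntegral_congr_fun measurableSet_Ioc fun θ _ => mul_comm _ _
    rw [ht, hθeq]
  rw [hKvol, ← hCOV, hlhs, hIntegral]

set_option maxHeartbeats 1000000 in
lemma area_general {h : ℝ → ℝ} (hh : ContDiff ℝ 2 h) (hper : Function.Periodic h (2 * π))
    (hR : ∀ θ, 0 ≤ Rf h θ) :
    (volume (Kset h)).toReal = (1/2) * ∫ θ in (0:ℝ)..(2*π), h θ * Rf h θ := by
  have h2π : (0:ℝ) < 2*π := by positivity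
  set a := h 0 with ha
  set b := deriv h 0 with hb
  set q : ℝ → ℝ := fun θ => a * Real.cos θ + b * Real.sin θ with hq
  set ht : ℝ → ℝ := fun θ => h θ - q θ with htdef
  clear_value ht
  have hq' : ∀ θ, HasDerivAt q (-a * Real.sin θ + b * Real.cos θ) θ := by
    intro θ
    have h1 := (Real.hasDerivAt_cos θ).const_mul a
    have h2 := (Real.hasDerivAt_sin θ).const_mul b
    refine (h1.add h2).congr_deriv ?_
    ring
  have hq'' : ∀ θ, HasDerivAt (fun θ => -a * Real.sin θ + b * Real.cos θ) (-(q θ)) θ := by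
    intro θ
    have h1 := (Real.hasDerivAt_sin θ).const_mul (-a)
    have h2 := (Real.hasDerivAt_cos θ).const_mul b
    refine (h1.add h2).congr_deriv ?_
    simp only [hq]
    ring
  have hqsmooth : ContDiff ℝ 2 q :=
    (contDiff_const.mul Real.contDiff_cos).add (contDiff_const.mul Real.contDiff_sin)
  have hhtsmooth : ContDiff ℝ 2 ht := by
    rw [htdef]
    exact hh.sub hqsmooth
  have hderiv_ht : deriv ht = fun θ => deriv h θ - (-a * Real.sin θ + b * Real.cos θ) := by
    funext θ
    rw [htdef, deriv_fun_sub ((diff0 hh) θ) (hq' θ).differentiableAt, (hq' θ).deriv]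
  have hRf_ht : ∀ θ, Rf ht θ = Rf h θ := by
    intro θ
    unfold Rf
    rw [hderiv_ht]
    have hd : deriv (fun θ => deriv h θ - (-a * Real.sin θ + b * Real.cos θ)) θ
        = deriv (deriv h) θ - (-(q θ)) := by
      rw [deriv_fun_sub ((diff1 hh) θ) (hq'' θ).differentiableAt, (hq'' θ).deriv]
    rw [hd, htdef]
    simp only []
    ring
  have hht_per : Function.Periodic ht (2*π) := by
    intro θ
    simp only [htdef, hq]
    rw [Real.cos_add_two_pi, Real.sin_add_two_pi, hper θ]
  have hht_nonneg : ∀ φ, 0 ≤ ht φ := by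
    intro φ
    have hs := supF_le hh hper hR φ 0
    have hqe : supF h φ 0 = q φ := by
      simp only [supF, hq, ha, hb, zero_sub, Real.cos_neg, Real.sin_neg]
      ring
    simp only [htdef]
    linarith
  have hKtrans : Kset h = (fun p : ℝ × ℝ => p + (-a, -b)) ⁻¹' Kset ht := by
    ext p
    simp only [Kset, mem_setOf_eq, mem_preimage, Prod.fst_add, Prod.snd_add, htdef, hq]
    constructor
    · intro H θ
      have := H θ
      linarith
    · intro H θ
      have := H θ
      linarith
  have hvol_trans : volume (Kset h) = volume (Kset ht) := by
    rw [hKtrans]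
    exact measure_preimage_add_right volume (-a, -b) (Kset ht)
  have hqint : (∫ θ in (0:ℝ)..(2*π), q θ * Rf h θ) = 0 := by
    set W : ℝ → ℝ := fun θ => q θ * deriv h θ - (-a * Real.sin θ + b * Real.cos θ) * h θ with hW
    have hWd : ∀ θ ∈ Set.uIcc (0:ℝ) (2*π), HasDerivAt W (q θ * Rf h θ) θ := by
      intro θ _
      have h1 := (hq' θ).mul ((diff1 hh) θ).hasDerivAt
      have h2 := (hq'' θ).mul ((diff0 hh) θ).hasDerivAt
      refine (h1.sub h2).congr_deriv ?_
      unfold Rf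
      simp only [hq]
      ring
    have hcontq : IntervalIntegrable (fun θ => q θ * Rf h θ) volume 0 (2*π) :=
      (hqsmooth.continuous.mul (contRf hh)).intervalIntegrable _ _
    rw [intervalIntegral.integral_eq_sub_of_hasDerivAt hWd hcontq]
    have e2 : h (2*π) = h 0 := by simpa using hper 0
    have e3 : deriv h (2*π) = deriv h 0 := by simpa using periodic_deriv h hper 0
    simp only [hW, hq]
    rw [e2, e3, Real.cos_two_pi, Real.sin_two_pi, Real.cos_zero, Real.sin_zero]
    ring
  have hint_eq : (∫ θ in (0:ℝ)..(2*π), ht θ * Rf h θ) = ∫ θ in (0:ℝ)..(2*π), h θ * Rf h θ := by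
    have hsub : ∀ θ, ht θ * Rf h θ = h θ * Rf h θ - q θ * Rf h θ := by
      intro θ
      simp only [htdef]
      ring
    rw [intervalIntegral.integral_congr (fun θ _ => hsub θ),
      intervalIntegral.integral_sub (f := fun θ => h θ * Rf h θ) (g := fun θ => q θ * Rf h θ) ((hh.continuous.mul (contRf hh)).intervalIntegrable _ _)
        ((hqsmooth.continuous.mul (contRf hh)).intervalIntegrable _ _), hqint]
    ring
  set I := ∫ θ in (0:ℝ)..(2*π), ht θ * Rf h θ with hI
  set A := ∫ θ in (0:ℝ)..(2*π), (ht θ + Rf h θ) with hA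
  have hseq : ∀ n : ℕ, volume (Kset (fun θ => ht θ + 1/((n:ℝ)+1)))
      = ENNReal.ofReal ((1/2) * (I + (1/((n:ℝ)+1)) * A + (1/((n:ℝ)+1))^2 * (2*π))) := by
    intro n
    set cn : ℝ := 1/((n:ℝ)+1) with hcn
    have hcnpos : 0 < cn := by positivity
    set gn : ℝ → ℝ := fun θ => ht θ + cn with hgn
    have hgnsmooth : ContDiff ℝ 2 gn := hhtsmooth.add contDiff_const
    have hgnper : Function.Periodic gn (2*π) := by
      intro θ
      simp only [hgn]
      rw [hht_per θ]
    have hderiv_gn : deriv gn = deriv ht := by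
      funext θ
      simp only [hgn]
      exact deriv_add_const _
    have hRf_gn : ∀ θ, Rf gn θ = Rf h θ + cn := by
      intro θ
      have h1 := hRf_ht θ
      unfold Rf at h1 ⊢
      rw [hderiv_gn]
      simp only [hgn]
      linarith
    have happ := area_pos hgnsmooth hgnper hcnpos
      (fun θ => by simp only [hgn]; linarith [hht_nonneg θ])
      (fun θ => by rw [hRf_gn θ]; linarith [hR θ])
    rw [happ]
    congr 1
    have hintegrand : ∀ θ, gn θ * Rf gn θ = ht θ * Rf h θ + cn * (ht θ + Rf h θ) + cn^2 := by
      intro θ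
      rw [hRf_gn θ]
      simp only [hgn]
      ring
    have if1 : IntervalIntegrable (fun θ => ht θ * Rf h θ) volume 0 (2*π) :=
      (hhtsmooth.continuous.mul (contRf hh)).intervalIntegrable _ _
    have if2 : IntervalIntegrable (fun θ => cn * (ht θ + Rf h θ)) volume 0 (2*π) :=
      (continuous_const.mul (hhtsmooth.continuous.add (contRf hh))).intervalIntegrable _ _
    rw [intervalIntegral.integral_congr (fun θ _ => hintegrand θ),
      intervalIntegral.integral_add (if1.add if2) intervalIntegrable_const,
      intervalIntegral.integral_add if1 if2,
      intervalIntegral.integral_const, intervalIntegral.integral_const_mul]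
    simp only [smul_eq_mul]
    ring
  clear_value I A
  have hKinter : Kset ht = ⋂ n : ℕ, Kset (fun θ => ht θ + 1/((n:ℝ)+1)) := by
    ext p
    simp only [Kset, mem_setOf_eq, mem_iInter]
    constructor
    · intro H n θ
      have h1 := H θ
      have h2 : (0:ℝ) < 1/((n:ℝ)+1) := by positivity
      show p.1 * Real.cos θ + p.2 * Real.sin θ ≤ ht θ + 1/((n:ℝ)+1)
      linarith
    · intro H θ
      by_contra hcon
      push_neg at hcon
      obtain ⟨n, hn⟩ := exists_nat_one_div_lt
        (show (0:ℝ) < p.1 * Real.cos θ + p.2 * Real.sin θ - ht θ by linarith)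
      have h3 : p.1 * Real.cos θ + p.2 * Real.sin θ ≤ ht θ + 1/((n:ℝ)+1) := H n θ
      linarith
  have hanti : Antitone (fun n : ℕ => Kset (fun θ => ht θ + 1/((n:ℝ)+1))) := by
    intro m n hmn p hp θ
    have h1 := hp θ
    have hle : (1:ℝ)/((n:ℝ)+1) ≤ 1/((m:ℝ)+1) := by
      apply one_div_le_one_div_of_le (by positivity)
      have : (m:ℝ) ≤ (n:ℝ) := by exact_mod_cast hmn
      linarith
    linarith
  obtain ⟨M, hM0, hM⟩ := exists_bound hhtsmooth.continuous hht_per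
  have hfin : volume (Kset (fun θ => ht θ + 1/(((0:ℕ):ℝ)+1))) ≠ ⊤ := by
    have hsub := Kset_subset_closedBall (g := fun θ => ht θ + 1/(((0:ℕ):ℝ)+1)) (M := M + 1)
      (by linarith) (fun θ => by norm_num; linarith [hM θ])
    exact ne_top_of_le_ne_top measure_closedBall_lt_top.ne (measure_mono hsub)
  have htend := tendsto_measure_iInter_atTop
    (μ := volume) (s := fun n : ℕ => Kset (fun θ => ht θ + 1/((n:ℝ)+1)))
    (fun n => (isClosed_Kset _).measurableSet.nullMeasurableSet) hanti ⟨0, hfin⟩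
  rw [← hKinter] at htend
  have hc0 : Filter.Tendsto (fun n : ℕ => 1/((n:ℝ)+1)) Filter.atTop (nhds 0) :=
    tendsto_one_div_add_atTop_nhds_zero_nat
  have hreal : Filter.Tendsto
      (fun n : ℕ => (1/2) * (I + (1/((n:ℝ)+1)) * A + (1/((n:ℝ)+1))^2 * (2*π)))
      Filter.atTop (nhds ((1/2) * I)) := by
    have h1 : Filter.Tendsto
        (fun n : ℕ => I + (1/((n:ℝ)+1)) * A + (1/((n:ℝ)+1))^2 * (2*π))
        Filter.atTop (nhds (I + 0 * A + 0^2 * (2*π))) :=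
      (tendsto_const_nhds.add (hc0.mul tendsto_const_nhds)).add
        ((hc0.pow 2).mul tendsto_const_nhds)
    have h2 := h1.const_mul (1/2 : ℝ)
    have h3 : (1/2 : ℝ) * (I + 0 * A + 0^2 * (2*π)) = (1/2) * I := by ring
    rw [h3] at h2
    exact h2
  have hEtend : Filter.Tendsto (fun n : ℕ => volume (Kset (fun θ => ht θ + 1/((n:ℝ)+1))))
      Filter.atTop (nhds (ENNReal.ofReal ((1/2) * I))) := by
    have hfe : (fun n : ℕ => volume (Kset (fun θ => ht θ + 1/((n:ℝ)+1))))
        = fun n : ℕ => ENNReal.ofReal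
            ((1/2) * (I + (1/((n:ℝ)+1)) * A + (1/((n:ℝ)+1))^2 * (2*π))) := funext hseq
    rw [hfe]
    exact (ENNReal.continuous_ofReal.tendsto _).comp hreal
  have hvol_ht : volume (Kset ht) = ENNReal.ofReal ((1/2) * I) :=
    tendsto_nhds_unique htend hEtend
  have hI0 : 0 ≤ I := by
    rw [hI]
    apply intervalIntegral.integral_nonneg h2π.le
    intro θ _
    exact mul_nonneg (hht_nonneg θ) (hR θ)
  rw [hvol_trans, hvol_ht, ENNReal.toReal_ofReal (by linarith)]
  linarith [hint_eq, hI]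

end CauchyArea

end CauchyAux

/-- The unit vector in direction `θ`, as an element of `ℝ²`. -/
noncomputable def unitVec (θ : ℝ) : EuclideanSpace ℝ (Fin 2) :=
  (WithLp.equiv 2 (Fin 2 → ℝ)).symm ![Real.cos θ, Real.sin θ]

/-- Cauchy's area formula: if `h` is a `C²`, `2π`-periodic function with
`h'' + h ≥ 0`, and `K` is the convex body with support function `h`, then
`vol(K) = (1/2) ∫₀^{2π} h(θ)·(h''(θ) + h(θ)) dθ`. -/
theorem area_formula (h : ℝ → ℝ) (hsm : ContDiff ℝ 2 h)
    (hper : Function.Periodic h (2 * π))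
    (hconv : ∀ θ : ℝ, 0 ≤ deriv (deriv h) θ + h θ)
    (K : Set (EuclideanSpace ℝ (Fin 2)))
    (hK : K = {x : EuclideanSpace ℝ (Fin 2) |
      ∀ θ : ℝ, (inner ℝ x (unitVec θ) : ℝ) ≤ h θ}) :
    (volume K).toReal =
      (1 / 2) * ∫ θ in (0 : ℝ)..(2 * π), h θ * (deriv (deriv h) θ + h θ) := by
  have hRf : ∀ θ, 0 ≤ CauchyArea.Rf h θ := hconv
  set e := (MeasurableEquiv.toLp 2 (Fin 2 → ℝ)).symm.trans (MeasurableEquiv.finTwoArrow) with he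
  have hmp : MeasurePreserving e volume volume :=
    (volume_preserving_finTwoArrow ℝ).comp
      (EuclideanSpace.volume_preserving_symm_measurableEquiv_toLp (Fin 2))
  have hKpre : K = e ⁻¹' (CauchyArea.Kset h) := by
    rw [hK]
    ext x
    simp only [Set.mem_setOf_eq, Set.mem_preimage, CauchyArea.Kset]
    have hex : e x = (x 0, x 1) := by
      simp [he, MeasurableEquiv.finTwoArrow]
    rw [hex]
    refine forall_congr' fun θ => ?_
    have hinner : (inner ℝ x (unitVec θ) : ℝ) = x 0 * Real.cos θ + x 1 * Real.sin θ := by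
      simp [unitVec, PiLp.inner_apply, Fin.sum_univ_two, RCLike.inner_apply]
      ring
    rw [hinner]
  have hvol : volume K = volume (CauchyArea.Kset h) := by
    rw [hKpre]
    exact hmp.measure_preimage
      (CauchyArea.isClosed_Kset h).measurableSet.nullMeasurableSet
  rw [hvol]
  exact CauchyArea.area_general hsm hper hRf
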